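/- Let A be a discrete valuation ring with completion Â (with respect to a uniformizer ϖ), K = Frac(A), K̂ = Frac(Â), and V a finite-dimensional K-vector space. Then the functors T ↦ T ⊗_A Â and T̂ ↦ T̂ ∩ V define mutually inverse bijections between the set of A-lattices of V and the set of Â-lattices of V ⊗_K K̂. -/

import Mathlib

set_option linter.unusedSectionVars false

noncomputable section

section Coord
variable (R F : Type*) [CommRing R] [Field F] [Algebra R F] (d : ℕ)

/-- The submodule of `Fᵈ` of vectors all of whose coordinates lie in `c · (image of R)`. -/
def coordSub (c : F) : Submodule R (Fin d → F) where
  carrier := {x | ∀ i, ∃ r : R, x i = algebraMap R F r * c}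
  add_mem' := by
    intro x y hx hy i
    obtain ⟨r, hr⟩ := hx i; obtain ⟨s, hs⟩ := hy i
    exact ⟨r + s, by simp [hr, hs, add_mul]⟩
  zero_mem' := fun i => ⟨0, by simp⟩
  smul_mem' := by
    intro a x hx i
    obtain ⟨r, hr⟩ := hx i
    exact ⟨a * r, by simp [hr, Algebra.smul_def, mul_assoc]⟩

variable {R F d}

lemma mem_coordSub {c : F} {x : Fin d → F} :
    x ∈ coordSub R F d c ↔ ∀ i, ∃ r : R, x i = algebraMap R F r * c := Iff.rfl

lemma single_mem_coordSub {c : F} (i : Fin d) : Pi.single i c ∈ coordSub R F d c := by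
  intro j
  rcases eq_or_ne j i with rfl | h
  · exact ⟨1, by simp⟩
  · exact ⟨0, by simp [Pi.single_apply, h]⟩

lemma coordSub_le_of_single_mem {c : F} {U : Submodule R (Fin d → F)}
    (h : ∀ i, Pi.single i c ∈ U) : coordSub R F d c ≤ U := by
  intro x hx
  choose r hr using hx
  have hxe : x = ∑ i : Fin d, r i • (Pi.single i c : Fin d → F) := by
    funext j
    rw [Finset.sum_apply]
    have : ∀ i : Fin d, ((r i • (Pi.single i c : Fin d → F)) : Fin d → F) j
        = if j = i then algebraMap R F (r j) * c else 0 := by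
      intro i
      rcases eq_or_ne j i with rfl | hne
      · simp [Pi.single_apply, Algebra.smul_def]
      · simp [Pi.single_apply, hne, Ne.symm hne]
    rw [Finset.sum_congr rfl fun i _ => this i]
    simp [hr j]
  rw [hxe]
  exact Submodule.sum_mem _ fun i _ => Submodule.smul_mem _ _ (h i)

lemma mul_smul_mem_coordSub {c : F} {x : Fin d → F} (hx : x ∈ coordSub R F d c) (r s : R) :
    ((r * s) • x) ∈ coordSub R F d (algebraMap R F r * c) := by
  intro i
  obtain ⟨u, hu⟩ := hx i
  refine ⟨s * u, ?_⟩
  rw [Pi.smul_apply, Algebra.smul_def, hu, map_mul, map_mul]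
  ring

lemma span_top_of_single_mem {c : F} {U : Submodule R (Fin d → F)} (hc : c ≠ 0)
    (h : ∀ i, Pi.single i c ∈ U) :
    Submodule.span F (U : Set (Fin d → F)) = ⊤ := by
  rw [eq_top_iff, ← (Pi.basisFun F (Fin d)).span_eq, Submodule.span_le]
  rintro _ ⟨i, rfl⟩
  have h1 : (Pi.basisFun F (Fin d)) i = c⁻¹ • (Pi.single i c : Fin d → F) := by
    funext j
    rcases eq_or_ne j i with rfl | hne
    · simp [Pi.single_apply, inv_mul_cancel₀ hc]
    · simp [Pi.single_apply, hne]
  rw [h1]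
  exact Submodule.smul_mem _ _ (Submodule.subset_span (h i))
end Coord

section DVR

variable {A : Type*} [CommRing A] [IsDomain A] [IsDiscreteValuationRing A]
  {Ah : Type*} [CommRing Ah] [IsDomain Ah] [Algebra A Ah]
  {K : Type*} [Field K] [Algebra A K] [IsFractionRing A K]
  {Kh : Type*} [Field Kh] [Algebra Ah Kh] [IsFractionRing Ah Kh]
  [Algebra A Kh] [IsScalarTower A Ah Kh] [Algebra K Kh] [IsScalarTower A K Kh]

/-- Clearing denominators in the fraction field of a DVR. -/
lemma clearK (ϖ : A) (hϖ : Irreducible ϖ) (x : K) :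
    ∃ (n : ℕ) (a : A), (algebraMap A K ϖ) ^ n * x = algebraMap A K a := by
  rcases eq_or_ne x 0 with rfl | hx
  · exact ⟨0, 0, by simp⟩
  obtain ⟨a, s, hs, rfl⟩ := IsFractionRing.div_surjective (A := A) x
  have hs0 : s ≠ 0 := nonZeroDivisors.ne_zero hs
  obtain ⟨n, u, hu⟩ := IsDiscreteValuationRing.associated_pow_irreducible hs0 hϖ
  refine ⟨n, a * (u : A), ?_⟩
  have hsK : algebraMap A K s ≠ 0 := by
    simpa using (IsFractionRing.injective A K).ne hs0
  field_simp
  rw [← map_mul, show s * (a * ↑u) = a * ϖ ^ n by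
    rw [← hu]; ring, map_mul, map_pow]
  ring

/-- An element of `Ah` outside `(ϖ̂)` is a unit. -/
lemma unitAh (ϖ : A) (hϖ : Irreducible ϖ)
    (hcomplete : IsAdicComplete (Ideal.span {algebraMap A Ah ϖ}) Ah)
    (hdense : ∀ (j : ℕ) (b : Ah), ∃ a : A,
      b - algebraMap A Ah a ∈ (Ideal.span {algebraMap A Ah ϖ}) ^ j)
    {c : Ah} (hc : c ∉ Ideal.span {algebraMap A Ah ϖ}) : IsUnit c := by
  obtain ⟨a, ha⟩ := hdense 1 c
  rw [pow_one] at ha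
  have haA : a ∉ Ideal.span {ϖ} := by
    intro h
    apply hc
    have h2 : algebraMap A Ah a ∈ Ideal.span {algebraMap A Ah ϖ} := by
      obtain ⟨t, rfl⟩ := Ideal.mem_span_singleton.mp h
      exact Ideal.mem_span_singleton.mpr ⟨algebraMap A Ah t, by rw [map_mul]⟩
    have := Ideal.add_mem _ ha h2
    simpa using this
  have haU : IsUnit a := by
    by_contra hau
    refine haA ?_
    rw [← Irreducible.maximalIdeal_eq hϖ]
    exact (IsLocalRing.mem_maximalIdeal a).mpr hau
  have haUAh : IsUnit (algebraMap A Ah a) := haU.map _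
  obtain ⟨v, hv⟩ := haUAh.exists_right_inv
  have hj : (c - algebraMap A Ah a) ∈ Ideal.jacobson ⊥ :=
    IsAdicComplete.le_jacobson_bot _ ha
  have := (Ideal.mem_jacobson_bot.mp hj) v
  have hc2 : c = algebraMap A Ah a * ((c - algebraMap A Ah a) * v + 1) := by
    rw [mul_add, mul_one, show algebraMap A Ah a * ((c - algebraMap A Ah a) * v)
      = (c - algebraMap A Ah a) * (algebraMap A Ah a * v) by ring, hv, mul_one]
    ring
  rw [hc2]
  exact haUAh.mul this

/-- Every nonzero element of `Ah` is `ϖ̂ⁿ` up to a unit. -/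
lemma factorAh (ϖ : A) (hϖ : Irreducible ϖ)
    (hcomplete : IsAdicComplete (Ideal.span {algebraMap A Ah ϖ}) Ah)
    (hdense : ∀ (j : ℕ) (b : Ah), ∃ a : A,
      b - algebraMap A Ah a ∈ (Ideal.span {algebraMap A Ah ϖ}) ^ j)
    {b : Ah} (hb : b ≠ 0) :
    ∃ (n : ℕ) (u : Ah), IsUnit u ∧ u * b = (algebraMap A Ah ϖ) ^ n := by
  set I : Ideal Ah := Ideal.span {algebraMap A Ah ϖ} with hI
  have hnotall : ¬ ∀ n : ℕ, b ∈ I ^ n := by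
    intro hall
    apply hb
    refine IsHausdorff.haus hcomplete.toIsHausdorff b fun n => ?_
    rw [SModEq.zero, smul_eq_mul, Ideal.mul_top]
    exact hall n
  push_neg at hnotall
  -- take the largest n with b ∈ I ^ n
  obtain ⟨n0, hn0⟩ := hnotall
  have hex : ∃ n : ℕ, b ∈ I ^ n ∧ b ∉ I ^ (n + 1) := by
    by_contra h
    push_neg at h
    apply hn0
    clear hn0
    induction n0 with
    | zero => simp
    | succ n ih => exact h n ih
  obtain ⟨n, hn, hn1⟩ := hex
  rw [hI, Ideal.span_singleton_pow, Ideal.mem_span_singleton] at hn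
  obtain ⟨c, rfl⟩ := hn
  have hc : c ∉ I := by
    intro hc
    apply hn1
    rw [hI, Ideal.mem_span_singleton] at hc
    obtain ⟨t, rfl⟩ := hc
    rw [hI, Ideal.span_singleton_pow, Ideal.mem_span_singleton]
    exact ⟨t, by ring⟩
  obtain ⟨u, hu⟩ := (unitAh ϖ hϖ hcomplete hdense hc).exists_left_inv
  exact ⟨n, u, IsUnit.of_mul_eq_one c hu, by
    rw [show u * ((algebraMap A Ah ϖ) ^ n * c) = (algebraMap A Ah ϖ) ^ n * (u * c) by ring,
      hu, mul_one]⟩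

/-- Clearing denominators in `Kh`. -/
lemma clearKh (ϖ : A) (hϖ : Irreducible ϖ)
    (hcomplete : IsAdicComplete (Ideal.span {algebraMap A Ah ϖ}) Ah)
    (hdense : ∀ (j : ℕ) (b : Ah), ∃ a : A,
      b - algebraMap A Ah a ∈ (Ideal.span {algebraMap A Ah ϖ}) ^ j)
    (x : Kh) :
    ∃ (n : ℕ) (b : Ah), (algebraMap A Kh ϖ) ^ n * x = algebraMap Ah Kh b := by
  obtain ⟨p, s, hs, rfl⟩ := IsFractionRing.div_surjective (A := Ah) x
  have hs0 : s ≠ 0 := nonZeroDivisors.ne_zero hs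
  obtain ⟨n, u, hu, huu⟩ := factorAh ϖ hϖ (Ah := Ah) hcomplete hdense hs0
  refine ⟨n, u * p, ?_⟩
  have hsK : algebraMap Ah Kh s ≠ 0 := by
    simpa using (IsFractionRing.injective Ah Kh).ne hs0
  have hπ : (algebraMap A Kh) ϖ = algebraMap Ah Kh (algebraMap A Ah ϖ) :=
    (IsScalarTower.algebraMap_apply A Ah Kh ϖ)
  rw [hπ]
  field_simp
  rw [← map_pow, ← map_mul, ← map_mul, ← huu]
  rw [map_mul, map_mul, map_mul, map_mul]
  ring

/-- `A = Ah ∩ K` inside `Kh`. -/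
lemma interAK (ϖ : A) (hϖ : Irreducible ϖ)
    (hker : ∀ (j : ℕ) (a : A),
      algebraMap A Ah a ∈ (Ideal.span {algebraMap A Ah ϖ}) ^ j → a ∈ (Ideal.span {ϖ}) ^ j)
    {k : K} {b : Ah} (h : algebraMap K Kh k = algebraMap Ah Kh b) :
    ∃ a : A, algebraMap A K a = k := by
  rcases eq_or_ne k 0 with rfl | hk
  · exact ⟨0, by simp⟩
  obtain ⟨p, s, hs, rfl⟩ := IsFractionRing.div_surjective (A := A) k
  have hs0 : s ≠ 0 := nonZeroDivisors.ne_zero hs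
  have hp0 : p ≠ 0 := by
    rintro rfl
    simp at hk
  obtain ⟨m, u, hu⟩ := IsDiscreteValuationRing.associated_pow_irreducible hp0 hϖ
  obtain ⟨l, w, hw⟩ := IsDiscreteValuationRing.associated_pow_irreducible hs0 hϖ
  have hsK : algebraMap A K s ≠ 0 := by
    simpa using (IsFractionRing.injective A K).ne hs0
  rcases le_or_gt l m with hlm | hml
  · -- k = (w * u⁻¹) * ϖ ^ (m - l) is in A
    refine ⟨(w : A) * (↑u⁻¹ : A) * ϖ ^ (m - l), ?_⟩
    have key : s * ((w : A) * (↑u⁻¹ : A) * ϖ ^ (m - l)) = p := by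
      have h1 : (ϖ : A) ^ m = ϖ ^ (m - l) * ϖ ^ l := by
        rw [← pow_add, Nat.sub_add_cancel hlm]
      calc s * ((w : A) * (↑u⁻¹ : A) * ϖ ^ (m - l))
          = (s * w) * ϖ ^ (m - l) * (↑u⁻¹ : A) := by ring
        _ = ϖ ^ l * ϖ ^ (m - l) * (↑u⁻¹ : A) := by rw [hw]
        _ = ϖ ^ m * (↑u⁻¹ : A) := by rw [h1]; ring
        _ = p * ((u : A) * (↑u⁻¹ : A)) := by rw [← hu]; ring
        _ = p := by
            have : (u : A) * (↑u⁻¹ : A) = 1 := u.mul_inv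
            rw [this, mul_one]
    rw [eq_comm, div_eq_iff hsK, ← map_mul, ← key]
    congr 1
    ring
  · -- impossible: k would have negative valuation
    exfalso
    have hKh : algebraMap A Kh p = algebraMap Ah Kh b * algebraMap A Kh s := by
      have hsKh : algebraMap K Kh (algebraMap A K s) ≠ 0 := by
        simpa using (algebraMap K Kh).injective.ne hsK
      rw [map_div₀, div_eq_iff hsKh] at h
      rw [IsScalarTower.algebraMap_apply A K Kh p, IsScalarTower.algebraMap_apply A K Kh s, h]
    -- transfer to an equation in Ah
    have hAh : algebraMap A Ah (ϖ ^ m * w) = b * algebraMap A Ah (ϖ ^ l * u) := by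
      apply IsFractionRing.injective Ah Kh
      have e1 : ∀ a : A, algebraMap Ah Kh (algebraMap A Ah a) = algebraMap A Kh a :=
        fun a => (IsScalarTower.algebraMap_apply A Ah Kh a).symm
      calc algebraMap Ah Kh (algebraMap A Ah (ϖ ^ m * w))
          = algebraMap A Kh (ϖ ^ m * w) := e1 _
        _ = algebraMap A Kh (p * u * w) := by rw [hu]
        _ = algebraMap A Kh p * algebraMap A Kh u * algebraMap A Kh w := by
            rw [map_mul, map_mul]
        _ = algebraMap Ah Kh b * (algebraMap A Kh (s * w) * algebraMap A Kh u) := by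
            rw [hKh, map_mul]; ring
        _ = algebraMap Ah Kh b * algebraMap A Kh (ϖ ^ l * u) := by
            rw [hw, map_mul]
        _ = algebraMap Ah Kh b * algebraMap Ah Kh (algebraMap A Ah (ϖ ^ l * u)) := by rw [e1]
        _ = algebraMap Ah Kh (b * algebraMap A Ah (ϖ ^ l * u)) := (map_mul _ _ _).symm
    have hmem : algebraMap A Ah (ϖ ^ m * w) ∈ (Ideal.span {algebraMap A Ah ϖ}) ^ l := by
      rw [Ideal.span_singleton_pow, Ideal.mem_span_singleton, hAh]
      exact ⟨b * algebraMap A Ah u, by rw [map_mul, map_pow]; ring⟩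
    have := hker l _ hmem
    rw [Ideal.span_singleton_pow, Ideal.mem_span_singleton] at this
    obtain ⟨t, ht⟩ := this
    -- ϖ ^ m * w = ϖ ^ l * t with m < l forces ϖ ∣ w, absurd
    have hcancel : (w : A) = ϖ ^ (l - m) * t := by
      have hπ0 : (ϖ : A) ^ m ≠ 0 := pow_ne_zero _ hϖ.ne_zero
      apply mul_left_cancel₀ hπ0
      rw [ht, show (ϖ:A) ^ l = ϖ ^ m * ϖ ^ (l - m) by
        rw [← pow_add, Nat.add_sub_cancel' hml.le]]
      ring
    have hdvd : ϖ ∣ (w : A) := by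
      rw [hcancel]
      exact Dvd.dvd.mul_right (dvd_pow_self ϖ (by omega)) t
    exact hϖ.not_isUnit (isUnit_of_dvd_unit hdvd w.isUnit)
end DVR

section Sandwich
variable {R F : Type*} [CommRing R] [Field F] [Algebra R F] {d : ℕ} {π : R}

lemma coordSub_inv_pow_mono (hπ0 : algebraMap R F π ≠ 0) {n N : ℕ} (h : n ≤ N) :
    coordSub R F d ((algebraMap R F π ^ n)⁻¹) ≤ coordSub R F d ((algebraMap R F π ^ N)⁻¹) := by
  intro x hx i
  obtain ⟨r, hr⟩ := hx i
  refine ⟨r * π ^ (N - n), ?_⟩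
  have hx2 : x i * algebraMap R F π ^ n = algebraMap R F r := by
    rw [hr]
    field_simp
  rw [map_mul, map_pow, eq_comm, mul_inv_eq_iff_eq_mul₀ (pow_ne_zero N hπ0), ← hx2,
    show (algebraMap R F π) ^ N = algebraMap R F π ^ n * algebraMap R F π ^ (N - n) by
      rw [← pow_add, Nat.add_sub_cancel' h]]
  ring

lemma pow_smul_mem (U : Submodule R (Fin d → F)) {t : Fin d → F} (ht : t ∈ U) (n : ℕ) :
    (algebraMap R F π ^ n) • t ∈ U := by
  induction n with
  | zero => simpa using ht
  | succ n ih =>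
      rw [pow_succ', mul_smul, algebraMap_smul]
      exact Submodule.smul_mem _ _ ih

lemma exists_single_mem
    (hclear : ∀ x : F, ∃ (n : ℕ) (r : R), (algebraMap R F π) ^ n * x = algebraMap R F r)
    (U : Submodule R (Fin d → F))
    (hspan : Submodule.span F (U : Set (Fin d → F)) = ⊤) :
    ∃ M : ℕ, ∀ i, (Pi.single i ((algebraMap R F π) ^ M) : Fin d → F) ∈ U := by
  have main : ∀ x ∈ Submodule.span F (U : Set (Fin d → F)),
      ∃ n : ℕ, ((algebraMap R F π) ^ n) • x ∈ U := by
    intro x hx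
    refine Submodule.span_induction (fun y hy => ⟨0, by simpa using hy⟩) ⟨0, by simp⟩
      ?_ ?_ hx
    · rintro y z - - ⟨n, hn⟩ ⟨m, hm⟩
      refine ⟨n + m, ?_⟩
      rw [smul_add]
      refine Submodule.add_mem _ ?_ ?_
      · rw [pow_add, mul_comm, mul_smul]
        exact pow_smul_mem U hn m
      · rw [pow_add, mul_smul]
        exact pow_smul_mem U hm n
    · rintro c y - ⟨n, hn⟩
      obtain ⟨k, r, hkr⟩ := hclear c
      refine ⟨k + n, ?_⟩
      have h2 : ((algebraMap R F π) ^ (k + n)) • (c • y)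
          = ((algebraMap R F π) ^ k * c) • (((algebraMap R F π) ^ n) • y) := by
        rw [smul_smul, smul_smul]
        congr 1
        rw [pow_add]
        ring
      rw [h2, hkr, algebraMap_smul]
      exact Submodule.smul_mem _ _ hn
  have hM : ∀ i : Fin d, ∃ n : ℕ,
      ((algebraMap R F π) ^ n) • (Pi.single i 1 : Fin d → F) ∈ U := by
    intro i
    refine main _ ?_
    rw [hspan]
    trivial
  choose f hf using hM
  refine ⟨Finset.univ.sup f, fun i => ?_⟩
  have h1 : (Pi.single i ((algebraMap R F π) ^ (Finset.univ.sup f)) : Fin d → F)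
      = ((algebraMap R F π) ^ (Finset.univ.sup f)) • (Pi.single i 1 : Fin d → F) := by
    funext j
    rcases eq_or_ne j i with rfl | hne
    · simp
    · simp [Pi.single_apply, hne]
  have h2 : (algebraMap R F π) ^ (Finset.univ.sup f)
      = (algebraMap R F π) ^ (Finset.univ.sup f - f i) * (algebraMap R F π) ^ (f i) := by
    rw [← pow_add, Nat.sub_add_cancel (Finset.le_sup (Finset.mem_univ i))]
  rw [h1, h2, mul_smul]
  exact pow_smul_mem U (hf i) _

set_option maxHeartbeats 1000000 in
lemma exists_le_coordSub (hπ0 : algebraMap R F π ≠ 0)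
    (hclear : ∀ x : F, ∃ (n : ℕ) (r : R), (algebraMap R F π) ^ n * x = algebraMap R F r)
    (U : Submodule R (Fin d → F)) (hfg : U.FG) :
    ∃ N : ℕ, U ≤ coordSub R F d (((algebraMap R F π) ^ N)⁻¹) := by
  obtain ⟨S, hS⟩ := hfg
  have key : ∀ x : Fin d → F, ∃ n : ℕ, x ∈ coordSub R F d (((algebraMap R F π) ^ n)⁻¹) := by
    intro x
    choose f hf using fun i => hclear (x i)
    choose r hr using fun i => hf i
    refine ⟨Finset.univ.sup f, fun i => ?_⟩
    refine ⟨r i * π ^ (Finset.univ.sup f - f i), ?_⟩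
    rw [eq_comm, mul_inv_eq_iff_eq_mul₀ (pow_ne_zero _ hπ0), map_mul, map_pow,
      show (algebraMap R F π) ^ (Finset.univ.sup f)
          = algebraMap R F π ^ (Finset.univ.sup f - f i) * algebraMap R F π ^ (f i) by
        rw [← pow_add, Nat.sub_add_cancel (Finset.le_sup (Finset.mem_univ i))],
      ← hr i]
    ring
  have key2 : ∀ y : {x // x ∈ S}, ∃ n : ℕ,
      (y : Fin d → F) ∈ coordSub R F d (((algebraMap R F π) ^ n)⁻¹) := fun y => key y.1
  choose g hg using key2
  refine ⟨S.attach.sup g, ?_⟩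
  rw [← hS, Submodule.span_le]
  intro y hy
  exact coordSub_inv_pow_mono hπ0 (Finset.le_sup (Finset.mem_attach S ⟨y, hy⟩)) (hg ⟨y, hy⟩)
end Sandwich

noncomputable section

variable {A : Type*} [CommRing A] [IsDomain A] [IsDiscreteValuationRing A]
  {Ah : Type*} [CommRing Ah] [IsDomain Ah] [Algebra A Ah]
  {K : Type*} [Field K] [Algebra A K] [IsFractionRing A K]
  {Kh : Type*} [Field Kh] [Algebra Ah Kh] [IsFractionRing Ah Kh]
  [Algebra A Kh] [IsScalarTower A Ah Kh] [Algebra K Kh] [IsScalarTower A K Kh]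
  {d : ℕ}

/-- The canonical `A`-linear embedding `V = Kᵈ → V ⊗_K K̂ = K̂ᵈ`. -/
def emb : (Fin d → K) →ₗ[A] (Fin d → Kh) where
  toFun v := fun i => algebraMap K Kh (v i)
  map_add' v w := by funext i; simp
  map_smul' a v := by
    funext i
    simp [Algebra.smul_def, ← IsScalarTower.algebraMap_apply]

/-- An `R`-lattice of `Fᵈ`: a finitely generated `R`-submodule spanning `Fᵈ` over `F`. -/
def IsLatticeOf (R F : Type*) [CommRing R] [Field F] [Algebra R F]
    (d : ℕ) (T : Submodule R (Fin d → F)) : Prop :=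
  T.FG ∧ Submodule.span F (T : Set (Fin d → F)) = ⊤

lemma emb_apply (v : Fin d → K) (i : Fin d) :
    ((emb : (Fin d → K) →ₗ[A] (Fin d → Kh)) v) i = algebraMap K Kh (v i) := rfl

lemma emb_single (i : Fin d) (c : K) :
    (emb : (Fin d → K) →ₗ[A] (Fin d → Kh)) (Pi.single i c) = (Pi.single i (algebraMap K Kh c) : Fin d → Kh) := by
  funext j
  rcases eq_or_ne j i with rfl | hne
  · simp [emb_apply]
  · simp [emb_apply, Pi.single_apply, hne]

lemma emb_mem_coordSub {c : K} {x : Fin d → K} (hx : x ∈ coordSub A K d c) :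
    (emb : (Fin d → K) →ₗ[A] (Fin d → Kh)) x ∈ coordSub Ah Kh d (algebraMap K Kh c) := by
  intro i
  obtain ⟨r, hr⟩ := hx i
  refine ⟨algebraMap A Ah r, ?_⟩
  rw [emb_apply, hr, map_mul, ← IsScalarTower.algebraMap_apply A K Kh,
    IsScalarTower.algebraMap_apply A Ah Kh]

lemma emb_span_mem {s : Set (Fin d → K)} {t : Fin d → K} (ht : t ∈ Submodule.span A s) :
    (emb : (Fin d → K) →ₗ[A] (Fin d → Kh)) t ∈ Submodule.span Ah ((emb : (Fin d → K) →ₗ[A] (Fin d → Kh)) '' s) := by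
  refine Submodule.span_induction (fun y hy => Submodule.subset_span ⟨y, hy, rfl⟩)
    (by simp) (fun y z _ _ hy hz => by rw [map_add]; exact Submodule.add_mem _ hy hz)
    (fun a y _ hy => ?_) ht
  rw [map_smul, ← algebraMap_smul Ah a ((emb : (Fin d → K) →ₗ[A] (Fin d → Kh)) y)]
  exact Submodule.smul_mem _ _ hy

/-- Finitely generated submodules absorb contained submodules over a Noetherian ring. -/
lemma fg_of_le_fg {R M : Type*} [CommRing R] [IsNoetherianRing R] [AddCommGroup M] [Module R M]
    {U W : Submodule R M} (hW : W.FG) (h : U ≤ W) : U.FG := by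
  have : Module.Finite R W := Module.Finite.iff_fg.mpr hW
  have h2 := IsNoetherian.noetherian (Submodule.comap W.subtype U)
  have h3 : Submodule.map W.subtype (Submodule.comap W.subtype U) = U := by
    rw [Submodule.map_comap_subtype, inf_eq_right.mpr h]
  rw [← h3]
  exact h2.map _

/-- Let `A` be a DVR with uniformizer `ϖ`, `Â` its `ϖ`-adic completion
(encoded by: `A → Â` injective, `Â` is `ϖ`-adically complete, `A` is dense in `Â` and
`A/(ϖ)ʲ ≅ Â/(ϖ)ʲ` for all `j`), `K = Frac A`, `K̂ = Frac Â`, and `V = Kᵈ` a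
finite-dimensional `K`-vector space.  Then `T ↦ T ⊗_A Â` (i.e. the `Â`-span of `T` in
`K̂ᵈ`) and `T̂ ↦ T̂ ∩ V` are mutually inverse bijections between the set of `A`-lattices of
`V` and the set of `Â`-lattices of `V ⊗_K K̂`. -/
theorem stmt9 (ϖ : A) (hϖ : Irreducible ϖ)
    (hinj : Function.Injective (algebraMap A Ah))
    (hcomplete : IsAdicComplete (Ideal.span {algebraMap A Ah ϖ}) Ah)
    (hdense : ∀ (j : ℕ) (b : Ah), ∃ a : A,
      b - algebraMap A Ah a ∈ (Ideal.span {algebraMap A Ah ϖ}) ^ j)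
    (hker : ∀ (j : ℕ) (a : A),
      algebraMap A Ah a ∈ (Ideal.span {algebraMap A Ah ϖ}) ^ j → a ∈ (Ideal.span {ϖ}) ^ j) :
    (∀ T : Submodule A (Fin d → K), IsLatticeOf A K d T →
      IsLatticeOf Ah Kh d (Submodule.span Ah (((emb : (Fin d → K) →ₗ[A] (Fin d → Kh))) '' (T : Set (Fin d → K)))) ∧
      Submodule.comap ((emb : (Fin d → K) →ₗ[A] (Fin d → Kh)))
        ((Submodule.span Ah (((emb : (Fin d → K) →ₗ[A] (Fin d → Kh))) '' (T : Set (Fin d → K)))).restrictScalars A) = T) ∧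
    (∀ Th : Submodule Ah (Fin d → Kh), IsLatticeOf Ah Kh d Th →
      IsLatticeOf A K d (Submodule.comap ((emb : (Fin d → K) →ₗ[A] (Fin d → Kh))) (Th.restrictScalars A)) ∧
      Submodule.span Ah (((emb : (Fin d → K) →ₗ[A] (Fin d → Kh))) ''
        ((Submodule.comap ((emb : (Fin d → K) →ₗ[A] (Fin d → Kh))) (Th.restrictScalars A)) : Set (Fin d → K))) = Th) := by
  have hπ0 : ϖ ≠ 0 := hϖ.ne_zero
  have hπK0 : algebraMap A K ϖ ≠ 0 := by
    simpa using (IsFractionRing.injective A K).ne hπ0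
  have hπKh0 : algebraMap K Kh (algebraMap A K ϖ) ≠ 0 := by
    simpa using (algebraMap K Kh).injective.ne hπK0
  have hcompat : algebraMap Ah Kh (algebraMap A Ah ϖ) = algebraMap K Kh (algebraMap A K ϖ) := by
    rw [← IsScalarTower.algebraMap_apply A Ah Kh, ← IsScalarTower.algebraMap_apply A K Kh]
  have hπAhKh0 : algebraMap Ah Kh (algebraMap A Ah ϖ) ≠ 0 := by rw [hcompat]; exact hπKh0
  have hclK : ∀ x : K, ∃ (n : ℕ) (r : A), (algebraMap A K ϖ) ^ n * x = algebraMap A K r :=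
    clearK ϖ hϖ
  have hclKh : ∀ x : Kh, ∃ (n : ℕ) (r : Ah),
      (algebraMap Ah Kh (algebraMap A Ah ϖ)) ^ n * x = algebraMap Ah Kh r := by
    intro x
    obtain ⟨n, b, hb⟩ := clearKh (Ah := Ah) ϖ hϖ hcomplete hdense x
    refine ⟨n, b, ?_⟩
    rw [← IsScalarTower.algebraMap_apply A Ah Kh]
    exact hb
  set e : (Fin d → K) →ₗ[A] (Fin d → Kh) := emb with he
  constructor
  · -- T ↦ span Ah (e '' T)
    rintro T ⟨hTfg, hTspan⟩
    obtain ⟨M, hM⟩ := exists_single_mem (π := ϖ) hclK T hTspan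
    obtain ⟨N, hN⟩ := exists_le_coordSub (π := ϖ) hπK0 hclK T hTfg
    have hMle : coordSub A K d ((algebraMap A K ϖ) ^ M) ≤ T := coordSub_le_of_single_mem hM
    have hembsingle : ∀ i, e (Pi.single i ((algebraMap A K ϖ) ^ M))
        = (Pi.single i ((algebraMap K Kh (algebraMap A K ϖ)) ^ M) : Fin d → Kh) := by
      intro i
      rw [he, emb_single]
      congr 1
      rw [map_pow]
    have hsingleSpan : ∀ i, (Pi.single i ((algebraMap K Kh (algebraMap A K ϖ)) ^ M) : Fin d → Kh)
        ∈ Submodule.span Ah (e '' (T : Set (Fin d → K))) := by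
      intro i
      exact Submodule.subset_span ⟨_, hM i, hembsingle i⟩
    refine ⟨⟨?_, ?_⟩, ?_⟩
    · -- FG
      obtain ⟨S, hS⟩ := hTfg
      have h1 : Submodule.span Ah (e '' (T : Set (Fin d → K)))
          = Submodule.span Ah (e '' (S : Set (Fin d → K))) := by
        apply le_antisymm
        · rw [Submodule.span_le]
          rintro _ ⟨t, ht, rfl⟩
          have ht' : t ∈ Submodule.span A (S : Set (Fin d → K)) := by rw [hS]; exact ht
          exact emb_span_mem ht'
        · exact Submodule.span_mono (Set.image_mono (by
            rw [show (S : Set (Fin d → K)) ⊆ (T : Set (Fin d → K))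
              ↔ ∀ x ∈ S, x ∈ T from Iff.rfl]
            intro x hx
            rw [← hS]
            exact Submodule.subset_span hx))
      rw [h1]
      exact Submodule.fg_span (S.finite_toSet.image _)
    · -- spans Kh
      exact span_top_of_single_mem (pow_ne_zero M hπKh0) hsingleSpan
    · -- comap = T
      apply le_antisymm
      · intro v hv
        have hv' : e v ∈ Submodule.span Ah (e '' (T : Set (Fin d → K))) := hv
        obtain ⟨n, f, g, hrep⟩ := Submodule.mem_span_set'.mp hv'
        choose t ht hgt using fun i : Fin n => (g i).2
        choose a ha using fun i : Fin n => hdense (N + M) (f i)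
        have hc : ∀ i, ∃ c : Ah,
            f i - algebraMap A Ah (a i) = (algebraMap A Ah ϖ) ^ (N + M) * c := by
          intro i
          have h2 := ha i
          rw [Ideal.span_singleton_pow, Ideal.mem_span_singleton] at h2
          exact h2
        choose c hc using hc
        have hwT : (∑ i, a i • t i) ∈ T :=
          Submodule.sum_mem _ fun i _ => Submodule.smul_mem _ _ (ht i)
        have hdiff : e v - e (∑ i, a i • t i)
            = ∑ i, ((algebraMap A Ah ϖ) ^ (N + M) * c i) • e (t i) := by
          rw [map_sum, ← hrep, ← Finset.sum_sub_distrib]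
          refine Finset.sum_congr rfl fun i _ => ?_
          calc f i • (g i : Fin d → Kh) - e (a i • t i)
              = f i • e (t i) - algebraMap A Ah (a i) • e (t i) := by
                rw [map_smul, algebraMap_smul, hgt i]
            _ = (f i - algebraMap A Ah (a i)) • e (t i) := (sub_smul _ _ _).symm
            _ = ((algebraMap A Ah ϖ) ^ (N + M) * c i) • e (t i) := by rw [hc i]
        have hcval : algebraMap Ah Kh ((algebraMap A Ah ϖ) ^ (N + M))
            * algebraMap K Kh (((algebraMap A K ϖ) ^ N)⁻¹)
            = (algebraMap K Kh (algebraMap A K ϖ)) ^ M := by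
          rw [map_pow, hcompat, map_inv₀, map_pow, pow_add]
          field_simp
        have hdiffmem : e v - e (∑ i, a i • t i)
            ∈ coordSub Ah Kh d ((algebraMap K Kh (algebraMap A K ϖ)) ^ M) := by
          rw [hdiff]
          refine Submodule.sum_mem _ fun i _ => ?_
          have h1 : e (t i) ∈ coordSub Ah Kh d
              (algebraMap K Kh (((algebraMap A K ϖ) ^ N)⁻¹)) := by
            rw [he]
            exact emb_mem_coordSub (hN (ht i))
          have h2 := mul_smul_mem_coordSub h1 ((algebraMap A Ah ϖ) ^ (N + M)) (c i)
          rw [hcval] at h2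
          exact h2
        rw [← map_sub] at hdiffmem
        have hvw : v - (∑ i, a i • t i) ∈ coordSub A K d ((algebraMap A K ϖ) ^ M) := by
          intro i
          obtain ⟨b, hb⟩ := hdiffmem i
          have h4 : algebraMap K Kh ((v - ∑ i, a i • t i) i * (((algebraMap A K ϖ) ^ M)⁻¹))
              = algebraMap Ah Kh b := by
            rw [map_mul, map_inv₀, map_pow, show algebraMap K Kh ((v - ∑ i, a i • t i) i)
              = e (v - ∑ i, a i • t i) i from rfl, hb]
            exact mul_inv_cancel_right₀ (pow_ne_zero _ hπKh0) _
          obtain ⟨aa, haa⟩ := interAK (Ah := Ah) ϖ hϖ hker h4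
          refine ⟨aa, ?_⟩
          rw [haa]
          exact (inv_mul_cancel_right₀ (pow_ne_zero _ hπK0) _).symm
        have hfin : v = (∑ i, a i • t i) + (v - ∑ i, a i • t i) := by abel
        rw [hfin]
        exact Submodule.add_mem _ hwT (hMle hvw)
      · intro v hv
        exact Submodule.subset_span ⟨v, hv, rfl⟩
  · -- Th ↦ comap e Th
    rintro Th ⟨hThfg, hThspan⟩
    obtain ⟨M, hM⟩ := exists_single_mem (R := Ah) (π := algebraMap A Ah ϖ) hclKh Th hThspan
    obtain ⟨N, hN⟩ := exists_le_coordSub (R := Ah) (π := algebraMap A Ah ϖ) hπAhKh0 hclKh Th hThfg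
    rw [hcompat] at hM hN
    have hTM : ∀ i, (Pi.single i ((algebraMap A K ϖ) ^ M) : Fin d → K)
        ∈ Submodule.comap e (Th.restrictScalars A) := by
      intro i
      have h1 : e (Pi.single i ((algebraMap A K ϖ) ^ M))
          = (Pi.single i ((algebraMap K Kh (algebraMap A K ϖ)) ^ M) : Fin d → Kh) := by
        rw [he, emb_single]
        congr 1
        rw [map_pow]
      show e _ ∈ (Th.restrictScalars A)
      rw [h1]
      exact hM i
    refine ⟨⟨?_, ?_⟩, ?_⟩
    · -- FG
      have hle : Submodule.comap e (Th.restrictScalars A)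
          ≤ coordSub A K d (((algebraMap A K ϖ) ^ N)⁻¹) := by
        intro v hv
        intro i
        have hev : e v ∈ Th := hv
        obtain ⟨b, hb⟩ := hN hev i
        have h4 : algebraMap K Kh (v i * (algebraMap A K ϖ) ^ N) = algebraMap Ah Kh b := by
          rw [map_mul, map_pow, show algebraMap K Kh (v i) = e v i from rfl, hb]
          exact inv_mul_cancel_right₀ (pow_ne_zero _ hπKh0) _
        obtain ⟨aa, haa⟩ := interAK (Ah := Ah) ϖ hϖ hker h4
        refine ⟨aa, ?_⟩
        rw [haa]
        exact (mul_inv_cancel_right₀ (pow_ne_zero _ hπK0) _).symm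
      have hWfg : (Submodule.span A (Set.range fun i : Fin d =>
          (Pi.single i (((algebraMap A K ϖ) ^ N)⁻¹) : Fin d → K))).FG :=
        Submodule.fg_span (Set.finite_range _)
      have hle2 : coordSub A K d (((algebraMap A K ϖ) ^ N)⁻¹)
          ≤ Submodule.span A (Set.range fun i : Fin d =>
            (Pi.single i (((algebraMap A K ϖ) ^ N)⁻¹) : Fin d → K)) :=
        coordSub_le_of_single_mem fun i => Submodule.subset_span ⟨i, rfl⟩
      exact fg_of_le_fg hWfg (hle.trans hle2)
    · exact span_top_of_single_mem (pow_ne_zero M hπK0) hTM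
    · apply le_antisymm
      · rw [Submodule.span_le]
        rintro _ ⟨t, ht, rfl⟩
        exact ht
      · intro x hx
        choose b hb using fun i => hN hx i
        choose a ha using fun i : Fin d => hdense (N + M) (b i)
        have hc : ∀ i, ∃ cc : Ah,
            b i - algebraMap A Ah (a i) = (algebraMap A Ah ϖ) ^ (N + M) * cc := by
          intro i
          have h2 := ha i
          rw [Ideal.span_singleton_pow, Ideal.mem_span_singleton] at h2
          exact h2
        choose cc hcc using hc
        set s : Fin d → K := fun i => algebraMap A K (a i) * (((algebraMap A K ϖ) ^ N)⁻¹)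
          with hs
        have hxs : x - e s ∈ coordSub Ah Kh d ((algebraMap K Kh (algebraMap A K ϖ)) ^ M) := by
          intro i
          refine ⟨cc i, ?_⟩
          have hesi : e s i = algebraMap Ah Kh (algebraMap A Ah (a i))
              * (((algebraMap K Kh (algebraMap A K ϖ)) ^ N)⁻¹) := by
            show algebraMap K Kh (s i) = _
            rw [hs]
            rw [map_mul, map_inv₀, map_pow, ← IsScalarTower.algebraMap_apply A K Kh,
              IsScalarTower.algebraMap_apply A Ah Kh]
          rw [Pi.sub_apply, hb i, hesi, ← sub_mul, ← map_sub, hcc i]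
          rw [map_mul, map_pow, hcompat, pow_add]
          field_simp
        have hsT : coordSub Ah Kh d ((algebraMap K Kh (algebraMap A K ϖ)) ^ M) ≤ Th :=
          coordSub_le_of_single_mem hM
        have hsSpan : coordSub Ah Kh d ((algebraMap K Kh (algebraMap A K ϖ)) ^ M)
            ≤ Submodule.span Ah (e '' ((Submodule.comap e (Th.restrictScalars A))
              : Set (Fin d → K))) := by
          refine coordSub_le_of_single_mem fun i => Submodule.subset_span ⟨_, hTM i, ?_⟩
          rw [he, emb_single]
          congr 1
          rw [map_pow]
        have hesTh : e s ∈ Th := by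
          have h5 : x - e s ∈ Th := hsT hxs
          have h6 : e s = x - (x - e s) := by abel
          rw [h6]
          exact Submodule.sub_mem _ hx h5
        have h7 : x = (x - e s) + e s := by abel
        rw [h7]
        exact Submodule.add_mem _ (hsSpan hxs)
          (Submodule.subset_span ⟨s, hesTh, rfl⟩)
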